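/- Let π be a permutation of {1,…,n} and k ≥ 0. If π contains no forbidden pattern of order k, then ssc(π) ≤ k. -/

import Mathlib

/-- The largest letter of a word (`0` for the empty word). -/
def listMax (l : List ℕ) : ℕ := l.foldr max 0

lemma listMax_mem {l : List ℕ} (h : l ≠ []) : listMax l ∈ l := by
  induction l with
  | nil => simp at h
  | cons a t ih =>
    rcases eq_or_ne t [] with rfl | ht
    · simp [listMax]
    · have ht' := ih ht
      have hcons : listMax (a :: t) = max a (listMax t) := rfl
      rcases le_total a (listMax t) with hle | hle
      · rw [hcons, max_eq_right hle]; exact List.mem_cons_of_mem _ ht'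
      · rw [hcons, max_eq_left hle]; exact List.mem_cons_self

/-- The stack-sorting operator `S`: `S` of the empty word is the empty word, and
if `π` is nonempty, writing `π = L·m·R` where `m` is the greatest letter of `π`,
then `S(π) = S(L)·S(R)·m`. -/
def stackSort : List ℕ → List ℕ
  | [] => []
  | x :: xs =>
    stackSort ((x :: xs).take ((x :: xs).idxOf (listMax (x :: xs)))) ++
      stackSort ((x :: xs).drop ((x :: xs).idxOf (listMax (x :: xs)) + 1)) ++
      [listMax (x :: xs)]
termination_by l => l.length
decreasing_by
  · have hm : listMax (x :: xs) ∈ x :: xs := listMax_mem (by simp)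
    have hi : (x :: xs).idxOf (listMax (x :: xs)) < (x :: xs).length :=
      List.idxOf_lt_length_iff.mpr hm
    simp only [List.length_take, List.length_cons] at *
    omega
  · simp only [List.length_drop, List.length_cons]
    omega

lemma le_listMax {l : List ℕ} {x : ℕ} (h : x ∈ l) : x ≤ listMax l := by
  induction l with
  | nil => simp at h
  | cons a t ih =>
    rcases List.mem_cons.1 h with rfl | h
    · exact le_max_left _ _
    · exact le_trans (ih h) (le_max_right _ _)

lemma stackSort_nil : stackSort [] = [] := by rw [stackSort]

lemma stackSort_cons (x : ℕ) (xs : List ℕ) :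
    stackSort (x :: xs) =
      stackSort ((x :: xs).take ((x :: xs).idxOf (listMax (x :: xs)))) ++
        stackSort ((x :: xs).drop ((x :: xs).idxOf (listMax (x :: xs)) + 1)) ++
        [listMax (x :: xs)] := by
  rw [stackSort]

lemma split_at_max {l : List ℕ} (h : l ≠ []) :
    l = l.take (l.idxOf (listMax l)) ++ listMax l :: l.drop (l.idxOf (listMax l) + 1) := by
  have hm := listMax_mem h
  have hi : l.idxOf (listMax l) < l.length := List.idxOf_lt_length_iff.mpr hm
  conv_lhs => rw [← List.take_append_drop (l.idxOf (listMax l)) l]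
  rw [List.drop_eq_getElem_cons hi, List.getElem_idxOf hi]

lemma stackSort_perm (l : List ℕ) : (stackSort l).Perm l := by
  suffices h : ∀ (n : ℕ) (l : List ℕ), l.length = n → (stackSort l).Perm l from h _ l rfl
  intro n
  induction n using Nat.strong_induction_on with
  | _ n ih =>
  intro l hn
  subst hn
  rcases l with _ | ⟨x, xs⟩
  · simp [stackSort_nil]
  · have hne : (x :: xs) ≠ [] := by simp
    have hm : listMax (x :: xs) ∈ x :: xs := listMax_mem hne
    have hil : (x :: xs).idxOf (listMax (x :: xs)) < (x :: xs).length :=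
      List.idxOf_lt_length_iff.mpr hm
    have hlt1 : ((x :: xs).take ((x :: xs).idxOf (listMax (x :: xs)))).length
        < (x :: xs).length := by
      simp only [List.length_take, List.length_cons] at *; omega
    have hlt2 : ((x :: xs).drop ((x :: xs).idxOf (listMax (x :: xs)) + 1)).length
        < (x :: xs).length := by
      simp only [List.length_drop, List.length_cons]; omega
    have p1 := ih _ hlt1 _ rfl
    have p2 := ih _ hlt2 _ rfl
    rw [stackSort_cons]
    refine ((p1.append p2).append (List.Perm.refl _)).trans ?_
    conv_rhs => rw [split_at_max hne]
    rw [List.append_assoc]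
    exact List.Perm.append_left _ (by simpa using (List.perm_append_singleton (listMax (x :: xs)) _))

lemma pair_split {x y : ℕ} {u v : List ℕ} (h : [x, y].Sublist (u ++ v)) :
    [x, y].Sublist u ∨ (x ∈ u ∧ y ∈ v) ∨ [x, y].Sublist v := by
  rcases List.sublist_append_iff.1 h with ⟨l₁, l₂, heq, h₁, h₂⟩
  rcases l₁ with _ | ⟨p, _ | ⟨q, t⟩⟩
  · right; right; rw [List.nil_append] at heq; rwa [← heq] at h₂
  · injection heq with e1 e2
    subst e1
    have e2' : [y] = l₂ := e2
    rw [← e2'] at h₂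
    exact Or.inr (Or.inl ⟨List.singleton_sublist.1 h₁, List.singleton_sublist.1 h₂⟩)
  · injection heq with e1 heq'; injection heq' with e2 e3
    obtain ⟨rfl, rfl⟩ := List.append_eq_nil_iff.1 e3.symm
    subst e1; subst e2
    exact Or.inl h₁

lemma triple_split {x y z : ℕ} {u v : List ℕ} (h : [x, y, z].Sublist (u ++ v)) :
    [x, y, z].Sublist u ∨ ([x, y].Sublist u ∧ z ∈ v) ∨ (x ∈ u ∧ [y, z].Sublist v) ∨
      [x, y, z].Sublist v := by
  rcases List.sublist_append_iff.1 h with ⟨l₁, l₂, heq, h₁, h₂⟩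
  rcases l₁ with _ | ⟨p, _ | ⟨q, _ | ⟨r, t⟩⟩⟩
  · right; right; right; rw [List.nil_append] at heq; rwa [← heq] at h₂
  · injection heq with e1 e2
    subst e1
    have e2' : [y, z] = l₂ := e2
    rw [← e2'] at h₂
    exact Or.inr (Or.inr (Or.inl ⟨List.singleton_sublist.1 h₁, h₂⟩))
  · injection heq with e1 heq'; injection heq' with e2 e3
    subst e1; subst e2
    have e3' : [z] = l₂ := e3
    rw [← e3'] at h₂
    exact Or.inr (Or.inl ⟨h₁, List.singleton_sublist.1 h₂⟩)
  · injection heq with e1 heq'; injection heq' with e2 heq''; injection heq'' with e3 e4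
    obtain ⟨rfl, rfl⟩ := List.append_eq_nil_iff.1 e4.symm
    subst e1; subst e2; subst e3
    exact Or.inl h₁

lemma key_step : ∀ (l : List ℕ), l.Nodup → ∀ (B : Finset ℕ) (c a : ℕ),
    a < c → [c, a].Sublist (stackSort l) →
    (∀ b ∈ B, a < b ∧ b < c ∧ [b, c, a].Sublist (stackSort l)) →
    ∃ c', c < c' ∧ [c, c', a].Sublist l ∧ ∀ b ∈ B, [b, c', a].Sublist l := by
  suffices h : ∀ (n : ℕ) (l : List ℕ), l.length = n → l.Nodup → ∀ (B : Finset ℕ) (c a : ℕ),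
      a < c → [c, a].Sublist (stackSort l) →
      (∀ b ∈ B, a < b ∧ b < c ∧ [b, c, a].Sublist (stackSort l)) →
      ∃ c', c < c' ∧ [c, c', a].Sublist l ∧ ∀ b ∈ B, [b, c', a].Sublist l from
    fun l => h l.length l rfl
  intro n
  induction n using Nat.strong_induction_on with
  | _ n ih =>
  intro l hn hnd B c a hac hca hB
  subst hn
  rcases l with _ | ⟨x, xs⟩
  · rw [stackSort_nil] at hca
    exact absurd (List.sublist_nil.1 hca) (by simp)
  · obtain ⟨L, m, R, hsplit, hmax, hS, hlenL, hlenR⟩ :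
        ∃ (L : List ℕ) (m : ℕ) (R : List ℕ), x :: xs = L ++ m :: R ∧
          (∀ v ∈ x :: xs, v ≤ m) ∧
          stackSort (x :: xs) = stackSort L ++ stackSort R ++ [m] ∧
          L.length < (x :: xs).length ∧ R.length < (x :: xs).length := by
      refine ⟨(x :: xs).take ((x :: xs).idxOf (listMax (x :: xs))), listMax (x :: xs),
        (x :: xs).drop ((x :: xs).idxOf (listMax (x :: xs)) + 1),
        split_at_max (by simp), fun v hv => le_listMax hv, stackSort_cons x xs, ?_, ?_⟩
      · have := List.idxOf_lt_length_iff.mpr (listMax_mem (l := x :: xs) (by simp))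
        simp only [List.length_take, List.length_cons] at *
        omega
      · simp only [List.length_drop, List.length_cons]
        omega
    have hnd' : (L ++ m :: R).Nodup := by rw [← hsplit]; exact hnd
    have ndL : L.Nodup := hnd'.of_append_left
    have ndmR : (m :: R).Nodup := hnd'.of_append_right
    have ndR : R.Nodup := ndmR.of_cons
    have hmR : m ∉ R := (List.nodup_cons.1 ndmR).1
    have hdisj : List.Disjoint L (m :: R) := List.disjoint_of_nodup_append hnd'
    have hmL : m ∉ L := fun h' => hdisj h' (List.mem_cons_self)
    have hLR : ∀ t, t ∈ L → t ∈ R → False :=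
      fun t h1 h2 => hdisj h1 (List.mem_cons_of_mem m h2)
    have memSL : ∀ t, t ∈ stackSort L → t ∈ L := fun t h' => (stackSort_perm L).mem_iff.1 h'
    have memSR : ∀ t, t ∈ stackSort R → t ∈ R := fun t h' => (stackSort_perm R).mem_iff.1 h'
    have hsubL : L.Sublist (x :: xs) := by
      rw [hsplit]; exact List.sublist_append_left _ _
    have hsubR : R.Sublist (x :: xs) := by
      rw [hsplit]
      exact ((List.sublist_cons_self m R).trans (List.sublist_append_right _ _))
    rw [hS] at hca
    -- c is at most m
    have hcm : c ≤ m := by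
      have hcmem : c ∈ stackSort L ++ stackSort R ++ [m] := hca.subset (by simp)
      rcases List.mem_append.1 hcmem with h' | h'
      · rcases List.mem_append.1 h' with h'' | h''
        · exact hmax c (by rw [hsplit]; exact List.mem_append.2 (Or.inl (memSL c h'')))
        · exact hmax c (by
            rw [hsplit]
            exact List.mem_append.2 (Or.inr (List.mem_cons_of_mem m (memSR c h''))))
      · simp only [List.mem_singleton] at h'; omega
    have ctri : [c, a].Sublist (stackSort L) ∨ (c ∈ L ∧ a ∈ R) ∨ [c, a].Sublist (stackSort R) := by
      rcases pair_split hca with h1 | ⟨hc1, ha1⟩ | h1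
      · rcases pair_split h1 with h2 | ⟨hc2, ha2⟩ | h2
        · exact Or.inl h2
        · exact Or.inr (Or.inl ⟨memSL c hc2, memSR a ha2⟩)
        · exact Or.inr (Or.inr h2)
      · simp only [List.mem_singleton] at ha1; omega
      · exact absurd h1.length_le (by simp)
    have btri : ∀ b ∈ B, [b, c, a].Sublist (stackSort L) ∨
        ([b, c].Sublist (stackSort L) ∧ a ∈ R) ∨
        (b ∈ L ∧ [c, a].Sublist (stackSort R)) ∨ [b, c, a].Sublist (stackSort R) := by
      intro b hb
      obtain ⟨hab, hbc, hsub⟩ := hB b hb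
      rw [hS] at hsub
      rcases triple_split hsub with h1 | ⟨h1, ha1⟩ | ⟨h1, h2⟩ | h1
      · rcases triple_split h1 with g | ⟨g, hga⟩ | ⟨g, hga⟩ | g
        · exact Or.inl g
        · exact Or.inr (Or.inl ⟨g, memSR a hga⟩)
        · exact Or.inr (Or.inr (Or.inl ⟨memSL b g, hga⟩))
        · exact Or.inr (Or.inr (Or.inr g))
      · simp only [List.mem_singleton] at ha1; omega
      · exact absurd h2.length_le (by simp)
      · exact absurd h1.length_le (by simp)
    rcases ctri with hca1 | ⟨hcL, haR⟩ | hca3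
    · -- both c and a in L
      have hcl : c ∈ L := memSL c (hca1.subset (by simp))
      have hal : a ∈ L := memSL a (hca1.subset (by simp))
      have hBX : ∀ b ∈ B, a < b ∧ b < c ∧ [b, c, a].Sublist (stackSort L) := by
        intro b hb
        refine ⟨(hB b hb).1, (hB b hb).2.1, ?_⟩
        rcases btri b hb with g | ⟨g, hga⟩ | ⟨g, h2⟩ | g
        · exact g
        · exact absurd hga (fun h' => hLR a hal h')
        · exact absurd (memSR c (h2.subset (by simp))) (fun h' => hLR c hcl h')
        · exact absurd (memSR c (g.subset (by simp))) (fun h' => hLR c hcl h')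
      obtain ⟨c', hcc', hsub1, hsub2⟩ := ih L.length hlenL L rfl ndL B c a hac hca1 hBX
      exact ⟨c', hcc', hsub1.trans hsubL, fun b hb => (hsub2 b hb).trans hsubL⟩
    · -- c in L, a in R : take c' = m
      have hcltm : c < m :=
        lt_of_le_of_ne hcm (fun h' => hmL (h' ▸ hcL))
      have hsubm : [c, m, a].Sublist (x :: xs) := by
        rw [hsplit]
        exact (List.singleton_sublist.2 hcL).append
          (List.Sublist.cons₂ m (List.singleton_sublist.2 haR))
      refine ⟨m, hcltm, hsubm, fun b hb => ?_⟩
      have hbL : b ∈ L := by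
        rcases btri b hb with g | ⟨g, hga⟩ | ⟨g, h2⟩ | g
        · exact absurd (memSL a (g.subset (by simp))) (fun h' => hLR a h' haR)
        · exact memSL b (g.subset (by simp))
        · exact g
        · exact absurd (memSR c (g.subset (by simp))) (fun h' => hLR c hcL h')
      rw [hsplit]
      exact (List.singleton_sublist.2 hbL).append
        (List.Sublist.cons₂ m (List.singleton_sublist.2 haR))
    · -- both c and a in R
      have hcR : c ∈ R := memSR c (hca3.subset (by simp))
      have hBX : ∀ b ∈ B.filter (fun b => b ∈ R),
          a < b ∧ b < c ∧ [b, c, a].Sublist (stackSort R) := by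
        intro b hb
        rw [Finset.mem_filter] at hb
        refine ⟨(hB b hb.1).1, (hB b hb.1).2.1, ?_⟩
        rcases btri b hb.1 with g | ⟨g, hga⟩ | ⟨g, h2⟩ | g
        · exact absurd (memSL c (g.subset (by simp))) (fun h' => hLR c h' hcR)
        · exact absurd (memSL c (g.subset (by simp))) (fun h' => hLR c h' hcR)
        · exact absurd g (fun h' => hLR b h' hb.2)
        · exact g
      obtain ⟨c', hcc', hsub1, hsub2⟩ :=
        ih R.length hlenR R rfl ndR (B.filter (fun b => b ∈ R)) c a hac hca3 hBX
      refine ⟨c', hcc', hsub1.trans hsubR, fun b hb => ?_⟩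
      by_cases hbR : b ∈ R
      · exact (hsub2 b (Finset.mem_filter.2 ⟨hb, hbR⟩)).trans hsubR
      · have hbL : b ∈ L := by
          rcases btri b hb with g | ⟨g, hga⟩ | ⟨g, h2⟩ | g
          · exact absurd (memSL c (g.subset (by simp))) (fun h' => hLR c h' hcR)
          · exact absurd (memSL c (g.subset (by simp))) (fun h' => hLR c h' hcR)
          · exact g
          · exact absurd (memSR b (g.subset (by simp))) hbR
        have h2 : [c', a].Sublist R := (List.sublist_cons_self c [c', a]).trans hsub1
        rw [hsplit]
        exact (List.singleton_sublist.2 hbL).append (List.Sublist.cons m h2)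

/-- `π` is a permutation of `{1, …, n}`, viewed as a word containing each of
`1, …, n` exactly once. -/
def IsPermWord (n : ℕ) (π : List ℕ) : Prop := π.Perm (List.range' 1 n)

/-- The stack-sorting complexity of `π`: the least `k ≥ 0` such that `S^k(π)`
is the identity word `1, 2, …, n` (where `n` is the length of `π`). -/
noncomputable def ssc (π : List ℕ) : ℕ :=
  sInf {k : ℕ | stackSort^[k] π = List.range' 1 π.length}

/-- `π` contains a forbidden pattern of order `k`: a triple `(B, c, a)` where
`B` is a set of `k` entries of `π` and `c`, `a` are entries of `π` such that
for every `b ∈ B` the subsequence `b, c, a` occurs in that order in `π` and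
satisfies `a < b < c` (an occurrence of the pattern `231`). -/
def HasForbiddenPattern (π : List ℕ) (k : ℕ) : Prop :=
  ∃ (B : Finset ℕ) (c a : ℕ), B.card = k ∧ (∀ b ∈ B, b ∈ π) ∧ c ∈ π ∧ a ∈ π ∧
    ∀ b ∈ B, a < b ∧ b < c ∧ ([b, c, a] : List ℕ).Sublist π


def StrongPat (k : ℕ) (l : List ℕ) : Prop :=
  ∃ (B : Finset ℕ) (c a : ℕ), B.card = k ∧ a < c ∧ [c, a].Sublist l ∧
    ∀ b ∈ B, a < b ∧ b < c ∧ [b, c, a].Sublist l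

lemma climb {l : List ℕ} (hnd : l.Nodup) {k : ℕ} (h : StrongPat k (stackSort l)) :
    StrongPat (k + 1) l := by
  obtain ⟨B, c, a, hcard, hac, hca, hB⟩ := h
  obtain ⟨c', hcc', hcca, hall⟩ := key_step l hnd B c a hac hca hB
  refine ⟨insert c B, c', a, ?_, lt_trans hac hcc', ?_, ?_⟩
  · rw [Finset.card_insert_of_notMem (fun hc => lt_irrefl c (hB c hc).2.1), hcard]
  · exact (List.sublist_cons_self c [c', a]).trans hcca
  · intro b hb
    rcases Finset.mem_insert.1 hb with rfl | hb
    · exact ⟨hac, hcc', hcca⟩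
    · exact ⟨(hB b hb).1, lt_trans (hB b hb).2.1 hcc', hall b hb⟩

lemma climb_iter : ∀ (k : ℕ) (l : List ℕ), l.Nodup →
    StrongPat 0 (stackSort^[k] l) → StrongPat k l := by
  intro k
  induction k with
  | zero => intro l _ h; simpa using h
  | succ k ih =>
    intro l hnd h
    rw [Function.iterate_succ_apply] at h
    exact climb hnd (ih _ ((stackSort_perm l).nodup_iff.2 hnd) h)

lemma exists_inversion {l : List ℕ} {n : ℕ} (hperm : l.Perm (List.range' 1 n))
    (hne : l ≠ List.range' 1 n) : StrongPat 0 l := by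
  by_contra h
  have hnd : l.Nodup := hperm.nodup_iff.2 (List.nodup_range' (s := 1) (n := n) 1 Nat.one_pos)
  have hpw : l.Pairwise (· < ·) := by
    rw [List.pairwise_iff_forall_sublist]
    intro u v huv
    rcases lt_trichotomy u v with h' | rfl | h'
    · exact h'
    · exfalso
      have : ([u, u] : List ℕ).Nodup := List.Nodup.sublist huv hnd
      simp at this
    · exact absurd ⟨∅, u, v, Finset.card_empty, h', huv, by simp⟩ h
  have s1 : l.Pairwise (· ≤ ·) := hpw.imp le_of_lt
  have s2 : (List.range' 1 n).Pairwise (· ≤ ·) := (List.pairwise_lt_range' (s := 1) (n := n)).imp le_of_lt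
  exact hne (List.Perm.eq_of_pairwise' s1 s2 hperm)

lemma iterate_perm (k : ℕ) (l : List ℕ) : (stackSort^[k] l).Perm l := by
  induction k with
  | zero => simp
  | succ k ih =>
    rw [Function.iterate_succ_apply']
    exact (stackSort_perm _).trans ih

lemma hfp_of_strong {l : List ℕ} {k : ℕ} (h : StrongPat k l) : HasForbiddenPattern l k := by
  obtain ⟨B, c, a, hcard, hac, hca, hB⟩ := h
  exact ⟨B, c, a, hcard, fun b hb => (hB b hb).2.2.subset (by simp),
    hca.subset (by simp), hca.subset (by simp), hB⟩

/-- If a permutation `π` of `{1,…,n}` contains no forbidden pattern of order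
`k`, then `ssc(π) ≤ k`. -/
theorem ssc_le_of_no_forbidden_pattern (n k : ℕ) (π : List ℕ) (hπ : IsPermWord n π)
    (h : ¬ HasForbiddenPattern π k) : ssc π ≤ k := by
  have hnd : π.Nodup := hπ.nodup_iff.2 (List.nodup_range' (s := 1) (n := n) 1 Nat.one_pos)
  have hlen : π.length = n := by simpa using hπ.length_eq
  have hid : stackSort^[k] π = List.range' 1 n := by
    by_contra hne
    have hp : (stackSort^[k] π).Perm (List.range' 1 n) := (iterate_perm k π).trans hπ
    exact h (hfp_of_strong (climb_iter k π hnd (exists_inversion hp hne)))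
  apply Nat.sInf_le
  show stackSort^[k] π = List.range' 1 π.length
  rw [hlen, hid]
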